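/- Let p,q ∈ ℝⁿ₊ and p',q' ∈ ℝⁿ'₊. Then (p,q) ≻ (p',q') holds if and only if β_x(p,q) ≤ β_x(p',q') for all x ∈ ℝ (equivalently, for all x ∈ [0, |p'|]). -/

import Mathlib

open scoped BigOperators



/-- max of `0` and finitely many linear functions `u*x - v*y`. -/
def maxL (T : List (ℝ × ℝ)) (x y : ℝ) : ℝ :=
  T.foldr (fun l m => max (l.1 * x - l.2 * y) m) 0

def maxSlope (T : List (ℝ × ℝ)) : ℝ := T.foldr (fun l m => max l.1 m) 0

lemma maxL_nonneg (T : List (ℝ × ℝ)) (x y : ℝ) : 0 ≤ maxL T x y := by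
  induction T with
  | nil => simp [maxL]
  | cons l T ih => simpa [maxL] using Or.inr ih

lemma le_maxL {T : List (ℝ × ℝ)} {l : ℝ × ℝ} (hl : l ∈ T) (x y : ℝ) :
    l.1 * x - l.2 * y ≤ maxL T x y := by
  induction T with
  | nil => simp at hl
  | cons a T ih =>
    rcases List.mem_cons.1 hl with h | h
    · subst h; simp [maxL]
    · simp only [maxL, List.foldr_cons]
      exact le_max_of_le_right (ih h)

lemma maxL_eq_zero_or_mem (T : List (ℝ × ℝ)) (x y : ℝ) :
    maxL T x y = 0 ∨ ∃ l ∈ T, maxL T x y = l.1 * x - l.2 * y := by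
  induction T with
  | nil => left; simp [maxL]
  | cons a T ih =>
    have : maxL (a :: T) x y = max (a.1 * x - a.2 * y) (maxL T x y) := rfl
    rcases le_total (a.1 * x - a.2 * y) (maxL T x y) with h | h
    · rw [this, max_eq_right h]
      rcases ih with h0 | ⟨l, hl, he⟩
      · exact Or.inl h0
      · exact Or.inr ⟨l, List.mem_cons_of_mem _ hl, he⟩
    · rw [this, max_eq_left h]
      exact Or.inr ⟨a, List.mem_cons_self, rfl⟩

lemma maxSlope_le {T : List (ℝ × ℝ)} {c : ℝ} (hc : 0 ≤ c) (h : ∀ l ∈ T, l.1 ≤ c) :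
    maxSlope T ≤ c := by
  induction T with
  | nil => simpa [maxSlope]
  | cons a T ih =>
    simp only [maxSlope, List.foldr_cons, max_le_iff]
    exact ⟨h a (List.mem_cons_self), ih fun l hl => h l (List.mem_cons_of_mem _ hl)⟩

lemma maxL_homog {T : List (ℝ × ℝ)} {y : ℝ} (hy : 0 < y) (x : ℝ) :
    maxL T x y = y * maxL T (x / y) 1 := by
  induction T with
  | nil => simp [maxL]
  | cons a T ih =>
    have h1 : maxL (a :: T) x y = max (a.1 * x - a.2 * y) (maxL T x y) := rfl
    have h2 : maxL (a :: T) (x / y) 1 = max (a.1 * (x / y) - a.2 * 1) (maxL T (x / y) 1) := rfl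
    rw [h1, h2, ih, mul_max_of_nonneg _ _ hy.le]
    congr 1
    field_simp



open scoped BigOperators



lemma sum_map_le {α : Type*} (l : List α) (f g : α → ℝ) (h : ∀ x ∈ l, f x ≤ g x) :
    (l.map f).sum ≤ (l.map g).sum := by
  induction l with
  | nil => simp
  | cons a l ih =>
    simp only [List.map_cons, List.sum_cons]
    exact add_le_add (h a (List.mem_cons_self))
      (ih fun x hx => h x (List.mem_cons_of_mem _ hx))

lemma sum_map_nonneg {α : Type*} (l : List α) (f : α → ℝ) (h : ∀ x ∈ l, 0 ≤ f x) :
    0 ≤ (l.map f).sum := by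
  simpa using sum_map_le l (fun _ => 0) f h

lemma sum_map_add {α : Type*} (l : List α) (f g : α → ℝ) :
    (l.map fun x => f x + g x).sum = (l.map f).sum + (l.map g).sum := by
  induction l with
  | nil => simp
  | cons a l ih => simp only [List.map_cons, List.sum_cons, ih]; ring

lemma sum_map_mul_right {α : Type*} (l : List α) (f : α → ℝ) (c : ℝ) :
    (l.map fun x => f x * c).sum = (l.map f).sum * c := by
  induction l with
  | nil => simp
  | cons a l ih => simp only [List.map_cons, List.sum_cons, ih]; ring

lemma sum_map_mul_left {α : Type*} (l : List α) (f : α → ℝ) (c : ℝ) :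
    (l.map fun x => c * f x).sum = c * (l.map f).sum := by
  induction l with
  | nil => simp
  | cons a l ih => simp only [List.map_cons, List.sum_cons, ih]; ring

lemma sum_map_filter_split {α : Type*} (l : List α) (p : α → Bool) (f : α → ℝ) :
    (l.map f).sum = ((l.filter p).map f).sum + ((l.filter (fun x => !(p x))).map f).sum := by
  induction l with
  | nil => simp
  | cons a l ih =>
    by_cases h : p a
    · simp [List.filter_cons, h, ih]; ring
    · simp only [Bool.not_eq_true] at h
      simp [List.filter_cons, h, ih]; ring

lemma cont_sum_map (R : List (ℝ × ℝ)) :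
    Continuous fun s : ℝ => (R.map fun r => r.1 * max (s - r.2) 0).sum := by
  induction R with
  | nil => simpa using continuous_const
  | cons a R ih =>
    simp only [List.map_cons, List.sum_cons]
    exact (continuous_const.mul ((continuous_id.sub continuous_const).max continuous_const)).add ih

lemma max_sub_max_le {a b : ℝ} (h : b ≤ a) : max a 0 - max b 0 ≤ a - b := by
  rcases le_total a 0 with ha | ha <;> rcases le_total b 0 with hb | hb <;>
    simp [max_eq_left, max_eq_right, *] <;> linarith



/-- Representation of `maxL T` as a nonnegative combination of hockey-stick functions. -/
lemma rep : ∀ T : List (ℝ × ℝ), T.Pairwise (fun a b => b.1 ≤ a.1) →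
    (∀ l ∈ T, 0 ≤ l.1 ∧ 0 ≤ l.2) →
    ∃ R : List (ℝ × ℝ), (∀ r ∈ R, 0 ≤ r.1 ∧ 0 ≤ r.2) ∧
      (R.map Prod.fst).sum ≤ maxSlope T ∧
      ∀ x y : ℝ, 0 ≤ x → 0 ≤ y →
        maxL T x y = (R.map fun r => r.1 * max (x - r.2 * y) 0).sum := by
  intro T hsort hnn
  induction T with
  | nil => exact ⟨[], by simp, by simp [maxSlope], by simp [maxL]⟩
  | cons a T ih =>
    have hsT : T.Pairwise (fun a b => b.1 ≤ a.1) := hsort.of_cons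
    have hle : ∀ b ∈ T, b.1 ≤ a.1 := fun b hb => (List.pairwise_cons.1 hsort).1 b hb
    have ha1 : 0 ≤ a.1 := (hnn a (List.mem_cons_self)).1
    have ha2 : 0 ≤ a.2 := (hnn a (List.mem_cons_self)).2
    obtain ⟨R, hRnn, hRsum, hRrep⟩ := ih hsT (fun l hl => hnn l (List.mem_cons_of_mem _ hl))
    set σ : ℝ := (R.map Prod.fst).sum with hσ
    have hσa : σ ≤ a.1 := hRsum.trans (maxSlope_le ha1 hle)
    -- one-variable function g
    set g : ℝ → ℝ := fun s => (R.map fun r => r.1 * max (s - r.2) 0).sum with hg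
    have hgT : ∀ s : ℝ, 0 ≤ s → maxL T s 1 = g s := by
      intro s hs
      rw [hRrep s 1 hs zero_le_one]
      simp [hg]
    have hg0 : g 0 = 0 := by
      simp only [hg]
      rw [List.sum_eq_zero]
      intro x hx
      obtain ⟨r, hr, rfl⟩ := List.mem_map.1 hx
      have := (hRnn r hr).2
      have : max (0 - r.2) 0 = 0 := by
        apply max_eq_right; linarith
      rw [this, mul_zero]
    have hgσ : ∀ s : ℝ, 0 ≤ s → g s ≤ σ * s := by
      intro s hs
      calc g s ≤ (R.map fun r => r.1 * s).sum := by
            apply sum_map_le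
            intro r hr
            have h1 := (hRnn r hr).1
            have h2 := (hRnn r hr).2
            apply mul_le_mul_of_nonneg_left _ h1
            apply max_le (by linarith) hs
        _ = σ * s := sum_map_mul_right R Prod.fst s
    have hglip : ∀ s₁ s₂ : ℝ, s₁ ≤ s₂ → g s₂ ≤ g s₁ + σ * (s₂ - s₁) := by
      intro s₁ s₂ h12
      have : g s₂ ≤ (R.map fun r => r.1 * max (s₁ - r.2) 0 + r.1 * (s₂ - s₁)).sum := by
        apply sum_map_le
        intro r hr
        have h1 := (hRnn r hr).1
        have : max (s₂ - r.2) 0 - max (s₁ - r.2) 0 ≤ (s₂ - r.2) - (s₁ - r.2) :=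
          max_sub_max_le (by linarith)
        nlinarith
      calc g s₂ ≤ _ := this
        _ = g s₁ + σ * (s₂ - s₁) := by
          rw [sum_map_add]
          congr 1
          exact sum_map_mul_right R Prod.fst (s₂ - s₁)
    -- the added line
    set ℓ : ℝ → ℝ := fun s => a.1 * s - a.2 with hℓ
    have hφmono : ∀ s₁ s₂ : ℝ, s₁ ≤ s₂ → ℓ s₁ - g s₁ ≤ ℓ s₂ - g s₂ := by
      intro s₁ s₂ h12
      have := hglip s₁ s₂ h12
      have : g s₂ - g s₁ ≤ σ * (s₂ - s₁) := by linarith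
      have h2 : ℓ s₂ - ℓ s₁ = a.1 * (s₂ - s₁) := by simp [hℓ]; ring
      nlinarith
    set A : Set ℝ := {s : ℝ | 0 ≤ s ∧ g s ≤ ℓ s} with hA
    by_cases hAne : A.Nonempty
    · -- crossing exists
      have hAclosed : IsClosed A := by
        have : A = Set.Ici (0:ℝ) ∩ {s | g s ≤ ℓ s} := by
          ext s; simp [hA, Set.mem_Ici]
        rw [this]
        exact isClosed_Ici.inter (isClosed_le (cont_sum_map R)
          ((continuous_const.mul continuous_id).sub continuous_const))
      have hAbdd : BddBelow A := ⟨0, fun s hs => hs.1⟩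
      set s₀ : ℝ := sInf A with hs₀def
      have hs₀A : s₀ ∈ A := hAclosed.csInf_mem hAne hAbdd
      have hs₀0 : 0 ≤ s₀ := hs₀A.1
      have hgs₀ : g s₀ ≤ ℓ s₀ := hs₀A.2
      have hℓs₀ : ℓ s₀ ≤ g s₀ := by
        rcases eq_or_lt_of_le hs₀0 with h0 | h0
        · rw [← h0, hg0]
          have : ℓ 0 = -a.2 := by simp [hℓ]
          rw [this]; linarith
        · -- left limit
          have hev : ∀ᶠ s in nhdsWithin s₀ (Set.Iio s₀), ℓ s - g s ≤ 0 := by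
            filter_upwards [Ioo_mem_nhdsLT h0] with s hs
            have hsnA : s ∉ A := notMem_of_lt_csInf hs.2 hAbdd
            have : ¬ (g s ≤ ℓ s) := fun hgl => hsnA ⟨hs.1.le, hgl⟩
            linarith
          have hcont : Continuous fun s => ℓ s - g s :=
            ((continuous_const.mul continuous_id).sub continuous_const).sub (cont_sum_map R)
          have := le_of_tendsto
            ((hcont.tendsto s₀).mono_left nhdsWithin_le_nhds) hev
          linarith
      have hcross : ℓ s₀ = g s₀ := le_antisymm hℓs₀ hgs₀
      -- the filtered list
      set RP : List (ℝ × ℝ) := R.filter (fun r => r.2 ≤ s₀) with hRP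
      have hRPmem : ∀ r ∈ RP, r ∈ R ∧ r.2 ≤ s₀ := by
        intro r hr
        have := List.mem_filter.1 hr
        exact ⟨this.1, by simpa using this.2⟩
      set σ₀ : ℝ := (RP.map Prod.fst).sum with hσ₀
      have hσ₀σ : σ₀ ≤ σ := by
        rw [hσ, sum_map_filter_split R (fun r => r.2 ≤ s₀) Prod.fst, ← hRP]
        have : 0 ≤ ((R.filter fun r => !(decide (r.2 ≤ s₀))).map Prod.fst).sum := by
          apply sum_map_nonneg
          intro r hr
          exact (hRnn r (List.mem_of_mem_filter hr)).1
        linarith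
      have hσ₀nn : 0 ≤ σ₀ := sum_map_nonneg _ _ fun r hr => (hRnn r (hRPmem r hr).1).1
      -- splitting g
      have hgsplit : ∀ s : ℝ, g s = (RP.map fun r => r.1 * max (s - r.2) 0).sum
          + ((R.filter fun r => !(decide (r.2 ≤ s₀))).map fun r => r.1 * max (s - r.2) 0).sum := by
        intro s
        exact sum_map_filter_split R (fun r => r.2 ≤ s₀) _
      have hgP : ∀ s : ℝ, s ≤ s₀ → g s = (RP.map fun r => r.1 * max (s - r.2) 0).sum := by
        intro s hs
        rw [hgsplit s]
        have : ((R.filter fun r => !(decide (r.2 ≤ s₀))).map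
            fun r => r.1 * max (s - r.2) 0).sum = 0 := by
          apply List.sum_eq_zero
          intro x hx
          obtain ⟨r, hr, rfl⟩ := List.mem_map.1 hx
          have h2 : ¬ (r.2 ≤ s₀) := by
            have := (List.mem_filter.1 hr).2
            simpa using this
          have : max (s - r.2) 0 = 0 := max_eq_right (by push_neg at h2; linarith)
          rw [this, mul_zero]
        rw [this, add_zero]
      refine ⟨(a.1 - σ₀, s₀) :: RP, ?_, ?_, ?_⟩
      · intro r hr
        rcases List.mem_cons.1 hr with h | h
        · subst h
          exact ⟨sub_nonneg.2 (hσ₀σ.trans hσa), hs₀0⟩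
        · exact hRnn r (hRPmem r h).1
      · have h : (((a.1 - σ₀, s₀) :: RP).map Prod.fst).sum
            = (a.1 - σ₀) + (RP.map Prod.fst).sum := rfl
        rw [h, ← hσ₀]
        have h2 : maxSlope (a :: T) = max a.1 (maxSlope T) := rfl
        rw [h2]
        have h3 : a.1 - σ₀ + σ₀ = a.1 := by ring
        rw [h3]
        exact le_max_left _ _
      · -- the main identity
        intro x y hx hy
        -- one-variable identity
        have key : ∀ s : ℝ, 0 ≤ s → max (ℓ s) (g s) =
            (a.1 - σ₀) * max (s - s₀) 0 + (RP.map fun r => r.1 * max (s - r.2) 0).sum := by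
          intro s hs
          rcases le_total s s₀ with hss | hss
          · have h1 : ℓ s - g s ≤ ℓ s₀ - g s₀ := hφmono s s₀ hss
            have h2 : ℓ s ≤ g s := by rw [hcross] at h1; linarith
            rw [max_eq_right h2, max_eq_right (by linarith), mul_zero, zero_add]
            exact hgP s hss
          · have h1 : ℓ s₀ - g s₀ ≤ ℓ s - g s := hφmono s₀ s hss
            have h2 : g s ≤ ℓ s := by rw [hcross] at h1; linarith
            rw [max_eq_left h2, max_eq_left (by linarith)]
            have hsum : (RP.map fun r => r.1 * max (s - r.2) 0).sum
                = (RP.map fun r => r.1 * max (s₀ - r.2) 0).sum + σ₀ * (s - s₀) := by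
              have hcongr : (RP.map fun r => r.1 * max (s - r.2) 0)
                  = RP.map fun r => r.1 * max (s₀ - r.2) 0 + r.1 * (s - s₀) := by
                apply List.map_congr_left
                intro r hr
                have hr2 := (hRPmem r hr).2
                have e1 : max (s - r.2) 0 = s - r.2 := max_eq_left (by linarith)
                have e2 : max (s₀ - r.2) 0 = s₀ - r.2 := max_eq_left (by linarith)
                rw [e1, e2]; ring
              rw [hcongr, sum_map_add, sum_map_mul_right, ← hσ₀]
            rw [hsum, ← hgP s₀ le_rfl, ← hcross]
            simp only [hℓ]
            ring
        rcases eq_or_lt_of_le hy with hy0 | hy0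
        · -- y = 0 case
          have hy0' : y = 0 := hy0.symm
          subst hy0'
          have hT0 : maxL T x 0 = σ * x := by
            rw [hRrep x 0 hx le_rfl]
            have : (R.map fun r => r.1 * max (x - r.2 * 0) 0) = R.map fun r => r.1 * x := by
              apply List.map_congr_left
              intro r _
              rw [mul_zero, sub_zero, max_eq_left hx]
            rw [this, sum_map_mul_right]
          have hL : maxL (a :: T) x 0 = max (a.1 * x - a.2 * 0) (maxL T x 0) := rfl
          rw [hL, hT0, mul_zero, sub_zero,
            max_eq_left (mul_le_mul_of_nonneg_right hσa hx)]
          simp only [List.map_cons, List.sum_cons, mul_zero, sub_zero, max_eq_left hx]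
          have : (RP.map fun r => r.1 * x) = RP.map fun r => r.1 * x := rfl
          have h2 : (RP.map fun r => r.1 * x).sum = σ₀ * x := sum_map_mul_right RP Prod.fst x
          rw [h2]; ring
        · -- y > 0 case
          have hs : 0 ≤ x / y := div_nonneg hx hy0.le
          have hL : maxL (a :: T) x y = y * maxL (a :: T) (x / y) 1 := maxL_homog hy0 x
          have hL2 : maxL (a :: T) (x / y) 1 = max (ℓ (x / y)) (g (x / y)) := by
            have : maxL (a :: T) (x / y) 1 = max (a.1 * (x / y) - a.2 * 1) (maxL T (x / y) 1) := rfl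
            rw [this, hgT _ hs]
            congr 1
            simp [hℓ]
          rw [hL, hL2, key _ hs]
          rw [mul_add]
          simp only [List.map_cons, List.sum_cons]
          congr 1
          · rw [← mul_assoc, mul_comm y (a.1 - σ₀), mul_assoc]
            congr 1
            rw [mul_max_of_nonneg _ _ hy0.le, mul_zero]
            congr 1
            field_simp
          · rw [← sum_map_mul_left]
            apply congrArg
            apply List.map_congr_left
            intro r hr
            rw [← mul_assoc, mul_comm y r.1, mul_assoc]
            congr 1
            rw [mul_max_of_nonneg _ _ hy0.le, mul_zero]
            congr 1
            field_simp
    · -- no crossing: the new line is dominated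
      have hdom : ∀ x y : ℝ, 0 ≤ x → 0 ≤ y → a.1 * x - a.2 * y ≤ maxL T x y := by
        intro x y hx hy
        have haσ : a.1 ≤ σ := by
          by_contra hc
          push_neg at hc
          have hd : 0 ≤ a.2 / (a.1 - σ) := div_nonneg ha2 (by linarith)
          have hs0 : (0:ℝ) ≤ a.2 / (a.1 - σ) + 1 := by linarith
          have h1 : g (a.2 / (a.1 - σ) + 1) ≤ σ * (a.2 / (a.1 - σ) + 1) := hgσ _ hs0
          have he : (a.1 - σ) * (a.2 / (a.1 - σ) + 1) = a.2 + (a.1 - σ) := by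
            rw [mul_add, mul_one, mul_div_cancel₀]
            intro h; rw [sub_eq_zero] at h; linarith
          have h2 : σ * (a.2 / (a.1 - σ) + 1) < ℓ (a.2 / (a.1 - σ) + 1) := by
            have hℓval : ℓ (a.2 / (a.1 - σ) + 1) = a.1 * (a.2 / (a.1 - σ) + 1) - a.2 := by
              simp [hℓ]
            nlinarith
          exact hAne ⟨_, hs0, by linarith⟩
        rcases eq_or_lt_of_le hy with hy0 | hy0
        · have hy0' : y = 0 := hy0.symm
          subst hy0'
          have hT0 : maxL T x 0 = σ * x := by
            rw [hRrep x 0 hx le_rfl]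
            have : (R.map fun r => r.1 * max (x - r.2 * 0) 0) = R.map fun r => r.1 * x := by
              apply List.map_congr_left
              intro r _
              rw [mul_zero, sub_zero, max_eq_left hx]
            rw [this, sum_map_mul_right]
          rw [hT0, mul_zero, sub_zero]
          exact mul_le_mul_of_nonneg_right haσ hx
        · have hs : 0 ≤ x / y := div_nonneg hx hy0.le
          have hnA : x / y ∉ A := fun h => hAne ⟨_, h⟩
          have : ¬ (g (x / y) ≤ ℓ (x / y)) := fun h => hnA ⟨hs, h⟩
          push_neg at this
          have h2 : a.1 * x - a.2 * y = y * ℓ (x / y) := by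
            simp only [hℓ]
            field_simp
          rw [h2, maxL_homog hy0, hgT _ hs]
          exact mul_le_mul_of_nonneg_left this.le hy0.le
      refine ⟨R, hRnn, ?_, ?_⟩
      · apply hRsum.trans
        have : maxSlope (a :: T) = max a.1 (maxSlope T) := rfl
        rw [this]
        exact le_max_right _ _
      · intro x y hx hy
        have : maxL (a :: T) x y = max (a.1 * x - a.2 * y) (maxL T x y) := rfl
        rw [this, max_eq_right (hdom x y hx hy)]
        exact hRrep x y hx hy


open scoped BigOperators

/-- A test: a vector with entries in `[0,1]`. -/
def IsTest {ι : Type*} [Fintype ι] (t : ι → ℝ) : Prop := ∀ i, 0 ≤ t i ∧ t i ≤ 1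

/-- Dot product of two vectors. -/
def dot {ι : Type*} [Fintype ι] (t p : ι → ℝ) : ℝ := ∑ i, t i * p i

/-- `beta x p q` is the infimum of `t ⬝ q` over tests `t` with `t ⬝ p ≥ x`,
with value `⊤` (`+∞`) when no feasible test exists. -/
noncomputable def beta {ι : Type*} [Fintype ι] (x : ℝ) (p q : ι → ℝ) : EReal :=
  sInf {y : EReal | ∃ t : ι → ℝ, IsTest t ∧ x ≤ dot t p ∧ y = ((dot t q : ℝ) : EReal)}

/-- `alpha y p q` is the supremum of `t ⬝ p` over tests `t` with `t ⬝ q ≤ y`. -/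
noncomputable def alpha {ι : Type*} [Fintype ι] (y : ℝ) (p q : ι → ℝ) : ℝ :=
  sSup {x : ℝ | ∃ t : ι → ℝ, IsTest t ∧ dot t q ≤ y ∧ x = dot t p}

/-- A nonnegative matrix all of whose column sums are at most `1`. -/
def Substochastic {ι' ι : Type*} [Fintype ι'] [Fintype ι] (M : Matrix ι' ι ℝ) : Prop :=
  (∀ i j, 0 ≤ M i j) ∧ ∀ j, ∑ i, M i j ≤ 1

/-- A nonnegative matrix all of whose column sums equal `1`. -/
def Stochastic {ι' ι : Type*} [Fintype ι'] [Fintype ι] (M : Matrix ι' ι ℝ) : Prop :=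
  (∀ i j, 0 ≤ M i j) ∧ ∀ j, ∑ i, M i j = 1

/-- Relative submajorization: `(p,q) ≻ (p',q')`. -/
def SubMaj {ι ι' : Type*} [Fintype ι] [Fintype ι'] (p q : ι → ℝ) (p' q' : ι' → ℝ) : Prop :=
  ∃ M : Matrix ι' ι ℝ, Substochastic M ∧
    (∀ i, p' i ≤ M.mulVec p i) ∧ (∀ i, M.mulVec q i ≤ q' i)

/-- Relative majorization: `(p,q) ≽ (p',q')`. -/
def RelMaj {ι ι' : Type*} [Fintype ι] [Fintype ι'] (p q : ι → ℝ) (p' q' : ι' → ℝ) : Prop :=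
  ∃ M : Matrix ι' ι ℝ, Stochastic M ∧ M.mulVec p = p' ∧ M.mulVec q = q'

/-- Approximate relative submajorization: `(p,q) ≻_{ε,η} (p',q')`. -/
def ApproxSubMaj {ι ι' : Type*} [Fintype ι] [Fintype ι'] (ε η : ℝ)
    (p q : ι → ℝ) (p' q' : ι' → ℝ) : Prop :=
  ∃ (M : Matrix ι' ι ℝ) (a b : ι' → ℝ), Substochastic M ∧
    (∀ i, 0 ≤ a i) ∧ (∀ i, 0 ≤ b i) ∧ (∑ i, a i) ≤ ε ∧ (∑ i, b i) ≤ η ∧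
    (∀ i, p' i - a i ≤ M.mulVec p i) ∧ (∀ i, M.mulVec q i ≤ q' i + b i)

/-- Partial sum `∑_{j=1}^k v_{π(j)}` of the first `k` entries of `v` in the order given by `π`. -/
def psum {n : ℕ} (v : Fin n → ℝ) (π : Equiv.Perm (Fin n)) (k : ℕ) : ℝ :=
  ∑ j ∈ Finset.univ.filter (fun j : Fin n => (j : ℕ) < k), v (π j)

/-- `λ*_z(R→R')`: the largest `λ ∈ [0,1]` with `(p,q) ≻ (λ p', z q')`. -/
noncomputable def lambdaStar {ι ι' : Type*} [Fintype ι] [Fintype ι'] (z : ℝ)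
    (p q : ι → ℝ) (p' q' : ι' → ℝ) : ℝ :=
  sSup {lam : ℝ | 0 ≤ lam ∧ lam ≤ 1 ∧
    SubMaj p q (fun i => lam * p' i) (fun i => z * q' i)}

/-- `z*_λ(R→R')`: the smallest `z ≥ 0` with `(p,q) ≻ (λ p', z q')`. -/
noncomputable def zStar {ι ι' : Type*} [Fintype ι] [Fintype ι'] (lam : ℝ)
    (p q : ι → ℝ) (p' q' : ι' → ℝ) : ℝ :=
  sInf {z : ℝ | 0 ≤ z ∧ SubMaj p q (fun i => lam * p' i) (fun i => z * q' i)}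

/-- `ε*_z(R→R')`: the smallest error of the first kind. -/
noncomputable def epsStar {ι ι' : Type*} [Fintype ι] [Fintype ι'] (z : ℝ)
    (p q : ι → ℝ) (p' q' : ι' → ℝ) : ℝ :=
  sInf {ε : ℝ | 0 ≤ ε ∧ ApproxSubMaj ε 0 p q p' (fun i => z * q' i)}

/-- `η̂*_z(R→R')`: the smallest error of the second kind. -/
noncomputable def etaStar {ι ι' : Type*} [Fintype ι] [Fintype ι'] (z : ℝ)
    (p q : ι → ℝ) (p' q' : ι' → ℝ) : ℝ :=
  sInf {η : ℝ | 0 ≤ η ∧ ApproxSubMaj 0 η p q p' (fun i => z * q' i)}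

/-- Relative entropy `D(u,v) = Σ u_k ln(u_k/v_k)` (with `0 ln 0 = 0`). -/
noncomputable def relEnt {ι : Type*} [Fintype ι] (u v : ι → ℝ) : ℝ :=
  ∑ k, u k * Real.log (u k / v k)

/-- `(p,q) ≻ (p',q')` iff the Lorenz curves are ordered: `β_x(p,q) ≤ β_x(p',q')` for all `x`. -/

-- ### small helpers

lemma stmt4_mul_le_max {t z : ℝ} (h0 : 0 ≤ t) (h1 : t ≤ 1) : t * z ≤ max z 0 := by
  rcases le_total z 0 with h | h
  · rw [max_eq_right h]; nlinarith
  · rw [max_eq_left h]; nlinarith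

lemma stmt4_finset_sum_list_sum {α ι : Type*} (s : Finset ι) (R : List α) (f : α → ι → ℝ) :
    ∑ i ∈ s, (R.map fun r => f r i).sum = (R.map fun r => ∑ i ∈ s, f r i).sum := by
  induction R with
  | nil => simp
  | cons a R ih =>
    simp only [List.map_cons, List.sum_cons, Finset.sum_add_distrib, ih]

lemma stmt4_dot_transfer {n n' : ℕ} (M : Matrix (Fin n') (Fin n) ℝ) (t' : Fin n' → ℝ)
    (v : Fin n → ℝ) :
    dot (fun j => ∑ i, t' i * M i j) v = ∑ i, t' i * M.mulVec v i := by
  have h : ∀ i, M.mulVec v i = ∑ j, M i j * v j := fun i => rfl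
  calc dot (fun j => ∑ i, t' i * M i j) v
      = ∑ j, (∑ i, t' i * M i j) * v j := rfl
    _ = ∑ j, ∑ i, t' i * M i j * v j := by
        refine Finset.sum_congr rfl fun j _ => ?_; rw [Finset.sum_mul]
    _ = ∑ i, ∑ j, t' i * M i j * v j := Finset.sum_comm
    _ = ∑ i, t' i * M.mulVec v i := by
        refine Finset.sum_congr rfl fun i _ => ?_
        rw [h i, Finset.mul_sum]
        exact Finset.sum_congr rfl fun j _ => (mul_assoc _ _ _)

-- ### forward direction

lemma stmt4_forward {n n' : ℕ} (p q : Fin n → ℝ) (p' q' : Fin n' → ℝ)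
    (h : SubMaj p q p' q') : ∀ x : ℝ, beta x p q ≤ beta x p' q' := by
  obtain ⟨M, ⟨hMnn, hMcol⟩, hMp, hMq⟩ := h
  intro x
  apply sInf_le_sInf_of_isCoinitialFor
  rintro y ⟨t', ht', hx, rfl⟩
  set t : Fin n → ℝ := fun j => ∑ i, t' i * M i j with htdef
  have htest : IsTest t := by
    intro j
    constructor
    · exact Finset.sum_nonneg fun i _ => mul_nonneg (ht' i).1 (hMnn i j)
    · calc ∑ i, t' i * M i j ≤ ∑ i, M i j :=
            Finset.sum_le_sum fun i _ => by
              have := (ht' i).2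
              have := (ht' i).1
              nlinarith [hMnn i j]
        _ ≤ 1 := hMcol j
  have hdp : dot t' p' ≤ dot t p := by
    rw [htdef, stmt4_dot_transfer]
    exact Finset.sum_le_sum fun i _ => mul_le_mul_of_nonneg_left (hMp i) (ht' i).1
  have hdq : dot t q ≤ dot t' q' := by
    rw [htdef, stmt4_dot_transfer]
    exact Finset.sum_le_sum fun i _ => mul_le_mul_of_nonneg_left (hMq i) (ht' i).1
  exact ⟨((dot t q : ℝ) : EReal), ⟨t, htest, le_trans hx hdp, rfl⟩,
    EReal.coe_le_coe_iff.2 hdq⟩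

-- ### attainment

lemma stmt4_exists_test_of_beta_le {n : ℕ} (p q : Fin n → ℝ) (x c : ℝ)
    (h : beta x p q ≤ (c : EReal)) :
    ∃ t : Fin n → ℝ, IsTest t ∧ x ≤ dot t p ∧ dot t q ≤ c := by
  classical
  set S : Set EReal :=
    {y : EReal | ∃ t : Fin n → ℝ, IsTest t ∧ x ≤ dot t p ∧ y = ((dot t q : ℝ) : EReal)}
    with hSdef
  have hbeta : beta x p q = sInf S := rfl
  set T : Set (Fin n → ℝ) := {t | IsTest t ∧ x ≤ dot t p} with hTdef
  have hTne : T.Nonempty := by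
    by_contra hne
    rw [Set.not_nonempty_iff_eq_empty] at hne
    have hSe : S = ∅ := by
      rw [Set.eq_empty_iff_forall_notMem]
      rintro y ⟨t, ht, hx2, rfl⟩
      have : t ∈ T := ⟨ht, hx2⟩
      rw [hne] at this
      exact this
    rw [hbeta, hSe, sInf_empty] at h
    exact absurd h (not_le.2 (EReal.coe_lt_top c))
  have hcontq : Continuous fun t : Fin n → ℝ => dot t q :=
    continuous_finset_sum _ fun i _ => (continuous_apply i).mul continuous_const
  have hcontp : Continuous fun t : Fin n → ℝ => dot t p :=
    continuous_finset_sum _ fun i _ => (continuous_apply i).mul continuous_const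
  have hTclosed : IsClosed T := by
    have : T = (⋂ i, ({t : Fin n → ℝ | 0 ≤ t i} ∩ {t : Fin n → ℝ | t i ≤ 1}))
        ∩ {t : Fin n → ℝ | x ≤ dot t p} := by
      ext t
      simp only [hTdef, Set.mem_setOf_eq, Set.mem_inter_iff, Set.mem_iInter, IsTest]
    rw [this]
    exact (isClosed_iInter fun i =>
      (isClosed_le continuous_const (continuous_apply i)).inter
        (isClosed_le (continuous_apply i) continuous_const)).inter
      (isClosed_le continuous_const hcontp)
  have hTcomp : IsCompact T := by
    refine IsCompact.of_isClosed_subset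
      (isCompact_univ_pi fun _ : Fin n => isCompact_Icc (a := (0:ℝ)) (b := 1)) hTclosed ?_
    intro t ht i _
    exact ⟨(ht.1 i).1, (ht.1 i).2⟩
  obtain ⟨t₀, ht₀T, hmin⟩ := hTcomp.exists_isMinOn hTne hcontq.continuousOn
  have hlb : ∀ y ∈ S, ((dot t₀ q : ℝ) : EReal) ≤ y := by
    rintro y ⟨t, ht, hx2, rfl⟩
    exact EReal.coe_le_coe_iff.2 (hmin ⟨ht, hx2⟩)
  have : ((dot t₀ q : ℝ) : EReal) ≤ (c : EReal) := le_trans (le_sInf hlb) (hbeta ▸ h)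
  exact ⟨t₀, ht₀T.1, ht₀T.2, EReal.coe_le_coe_iff.1 this⟩

-- ### backward direction

set_option maxHeartbeats 2000000 in
lemma stmt4_backward {n n' : ℕ} (p q : Fin n → ℝ) (p' q' : Fin n' → ℝ)
    (hp : ∀ i, 0 ≤ p i) (hq : ∀ i, 0 ≤ q i)
    (hp' : ∀ i, 0 ≤ p' i) (hq' : ∀ i, 0 ≤ q' i)
    (H : ∀ t' : Fin n' → ℝ, IsTest t' →
      ∃ t : Fin n → ℝ, IsTest t ∧ dot t' p' ≤ dot t p ∧ dot t q ≤ dot t' q') :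
    SubMaj p q p' q' := by
  classical
  have hev : ∀ (i : Fin n') (j : Fin n), Continuous fun W : Fin n' → Fin n → ℝ => W i j :=
    fun i j => (continuous_apply j).comp (continuous_apply i)
  -- Dahl-type criterion
  have D : ∀ τ : ℝ, 0 ≤ τ →
      ∑ i, max (p' i - τ * q' i) 0 ≤ ∑ j, max (p j - τ * q j) 0 := by
    intro τ hτ
    set t' : Fin n' → ℝ := fun i => if 0 < p' i - τ * q' i then 1 else 0 with ht'def
    have ht' : IsTest t' := by
      intro i
      dsimp [t']
      split <;> norm_num
    obtain ⟨t, ht, htp, htq⟩ := H t' ht'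
    have e1 : ∑ i, max (p' i - τ * q' i) 0 = dot t' p' - τ * dot t' q' := by
      rw [dot, dot, Finset.mul_sum, ← Finset.sum_sub_distrib]
      refine Finset.sum_congr rfl fun i _ => ?_
      dsimp [t']
      split
      · rename_i hpos; rw [max_eq_left (le_of_lt hpos)]; ring
      · rename_i hneg; push_neg at hneg; rw [max_eq_right hneg]; ring
    have e2 : dot t' p' - τ * dot t' q' ≤ dot t p - τ * dot t q := by
      have := mul_le_mul_of_nonneg_left htq hτ
      linarith
    have e3 : dot t p - τ * dot t q ≤ ∑ j, max (p j - τ * q j) 0 := by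
      rw [dot, dot, Finset.mul_sum, ← Finset.sum_sub_distrib]
      refine Finset.sum_le_sum fun j _ => ?_
      have hh : t j * p j - τ * (t j * q j) = t j * (p j - τ * q j) := by ring
      rw [hh]
      exact stmt4_mul_le_max (ht j).1 (ht j).2
    linarith
  -- trivial case
  rcases Nat.eq_zero_or_pos n' with h0 | hpos
  · subst h0
    exact ⟨0, ⟨fun i j => le_of_eq rfl, fun j => by simp⟩, fun i => i.elim0, fun i => i.elim0⟩
  haveI : Nonempty (Fin n') := ⟨⟨0, hpos⟩⟩
  by_contra hns
  -- the compact convex image set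
  set SetS : Set (Fin n' → Fin n → ℝ) := {W | (∀ i j, 0 ≤ W i j) ∧ ∀ j, ∑ i, W i j ≤ 1} with hSetSdef
  set Φ : (Fin n' → Fin n → ℝ) → ((Fin n' → ℝ) × (Fin n' → ℝ)) := fun W => (fun i => ∑ j, W i j * p j, fun i => ∑ j, W i j * q j) with hΦdef
  have hSclosed : IsClosed SetS := by
    have : SetS = (⋂ i, ⋂ j, {W : Fin n' → Fin n → ℝ | 0 ≤ W i j}) ∩ ⋂ j, {W : Fin n' → Fin n → ℝ | ∑ i, W i j ≤ 1} := by
      ext W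
      simp only [hSetSdef, Set.mem_setOf_eq, Set.mem_inter_iff, Set.mem_iInter]
    rw [this]
    exact (isClosed_iInter fun i => isClosed_iInter fun j =>
        isClosed_le continuous_const (hev i j)).inter
      (isClosed_iInter fun j => isClosed_le
        (continuous_finset_sum _ fun i _ => hev i j)
        continuous_const)
  have hScomp : IsCompact SetS := by
    refine IsCompact.of_isClosed_subset
      (isCompact_univ_pi fun _ : Fin n' =>
        isCompact_univ_pi fun _ : Fin n => isCompact_Icc (a := (0:ℝ)) (b := 1))
      hSclosed ?_
    intro W hW i _
    intro j _
    exact ⟨hW.1 i j,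
      le_trans (Finset.single_le_sum (fun i' _ => hW.1 i' j) (Finset.mem_univ i)) (hW.2 j)⟩
  have hSconv : Convex ℝ SetS := by
    intro W hW Z hZ a b ha hb hab
    constructor
    · intro i j
      have : (a • W + b • Z) i j = a * W i j + b * Z i j := rfl
      rw [this]
      exact add_nonneg (mul_nonneg ha (hW.1 i j)) (mul_nonneg hb (hZ.1 i j))
    · intro j
      calc ∑ i, (a • W + b • Z) i j = ∑ i, (a * W i j + b * Z i j) :=
            Finset.sum_congr rfl fun i _ => rfl
        _ = a * ∑ i, W i j + b * ∑ i, Z i j := by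
            rw [Finset.sum_add_distrib, Finset.mul_sum, Finset.mul_sum]
        _ ≤ a * 1 + b * 1 := add_le_add
            (mul_le_mul_of_nonneg_left (hW.2 j) ha)
            (mul_le_mul_of_nonneg_left (hZ.2 j) hb)
        _ = 1 := by rw [mul_one, mul_one, hab]
  have hΦlin : IsLinearMap ℝ Φ := by
    constructor
    · intro W Z
      apply Prod.ext <;> · ext i; simp [hΦdef, Finset.sum_add_distrib, add_mul]
    · intro c W
      apply Prod.ext <;> · ext i; simp [hΦdef, Finset.mul_sum, mul_assoc]
  have hΦcont : Continuous Φ := by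
    apply Continuous.prodMk <;>
      exact continuous_pi fun i => continuous_finset_sum _ fun j _ =>
        (hev i j).mul continuous_const
  set K : Set ((Fin n' → ℝ) × (Fin n' → ℝ)) := Φ '' SetS with hKdef
  have hKcomp : IsCompact K := hScomp.image hΦcont
  have hKconv : Convex ℝ K := hSconv.is_linear_image hΦlin
  -- the target set
  set Dset : Set ((Fin n' → ℝ) × (Fin n' → ℝ)) := {z | (∀ i, p' i ≤ z.1 i) ∧ ∀ i, z.2 i ≤ q' i} with hDdef
  have hDclosed : IsClosed Dset := by
    have : Dset = (⋂ i, {z : (Fin n' → ℝ) × (Fin n' → ℝ) | p' i ≤ z.1 i}) ∩ ⋂ i, {z : (Fin n' → ℝ) × (Fin n' → ℝ) | z.2 i ≤ q' i} := by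
      ext z
      simp only [hDdef, Set.mem_setOf_eq, Set.mem_inter_iff, Set.mem_iInter]
    rw [this]
    have hev1 : ∀ i : Fin n', Continuous fun z : (Fin n' → ℝ) × (Fin n' → ℝ) => z.1 i :=
      fun i => (continuous_apply i).comp continuous_fst
    have hev2 : ∀ i : Fin n', Continuous fun z : (Fin n' → ℝ) × (Fin n' → ℝ) => z.2 i :=
      fun i => (continuous_apply i).comp continuous_snd
    exact (isClosed_iInter fun i =>
        isClosed_le continuous_const (hev1 i)).inter
      (isClosed_iInter fun i =>
        isClosed_le (hev2 i) continuous_const)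
  have hDconv : Convex ℝ Dset := by
    intro z hz w hw a b ha hb hab
    constructor
    · intro i
      have h1 := hz.1 i
      have h2 := hw.1 i
      have : (a • z + b • w).1 i = a * z.1 i + b * w.1 i := rfl
      rw [this]
      have h3 : a * p' i + b * p' i = p' i := by rw [← add_mul, hab, one_mul]
      linarith [mul_le_mul_of_nonneg_left h1 ha, mul_le_mul_of_nonneg_left h2 hb]
    · intro i
      have h1 := hz.2 i
      have h2 := hw.2 i
      have : (a • z + b • w).2 i = a * z.2 i + b * w.2 i := rfl
      rw [this]
      have h3 : a * q' i + b * q' i = q' i := by rw [← add_mul, hab, one_mul]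
      linarith [mul_le_mul_of_nonneg_left h1 ha, mul_le_mul_of_nonneg_left h2 hb]
  have hdisj : Disjoint K Dset := by
    rw [Set.disjoint_left]
    rintro z ⟨W, hWS, rfl⟩ hzD
    refine hns ⟨Matrix.of W, hWS, fun i => hzD.1 i, fun i => hzD.2 i⟩
  obtain ⟨f, ub, vb, hfK, hubvb, hfD⟩ :=
    geometric_hahn_banach_compact_closed hKconv hKcomp hDconv hDclosed hdisj
  -- extract coefficients
  set uu : Fin n' → ℝ := fun i => f ((Pi.single i 1 : Fin n' → ℝ), 0) with huudef
  set ww : Fin n' → ℝ := fun i => f ((0 : Fin n' → ℝ), (Pi.single i 1 : Fin n' → ℝ)) with hwwdef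
  set vv : Fin n' → ℝ := fun i => -(ww i) with hvvdef
  have hexpand : ∀ a b : Fin n' → ℝ, f (a, b) = ∑ i, a i * uu i + ∑ i, b i * ww i := by
    intro a b
    have h1 : (a, b) = (∑ i, a i • ((Pi.single i 1 : Fin n' → ℝ), (0 : Fin n' → ℝ)))
        + ∑ i, b i • ((0 : Fin n' → ℝ), (Pi.single i 1 : Fin n' → ℝ)) := by
      apply Prod.ext <;>
        simp only [Prod.fst_sum, Prod.snd_sum, Prod.smul_mk, Prod.fst_add, Prod.snd_add,
          smul_zero, Finset.sum_const_zero, add_zero, zero_add] <;>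
      · ext j
        rw [Finset.sum_apply]
        simp [Pi.single_apply]
    rw [h1, map_add, map_sum, map_sum]
    congr 1 <;> refine Finset.sum_congr rfl fun i _ => ?_ <;> rw [map_smul, smul_eq_mul]
  have hpqD : ((p', q') : (Fin n' → ℝ) × (Fin n' → ℝ)) ∈ Dset := ⟨fun i => le_rfl, fun i => le_rfl⟩
  have hfp : vb < f (p', q') := hfD _ hpqD
  have hsingle_nonneg : ∀ (i k : Fin n'), 0 ≤ (Pi.single i (1:ℝ) : Fin n' → ℝ) k := by
    intro i k
    rcases eq_or_ne k i with h | h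
    · subst h; simp
    · simp [Pi.single_apply, h]
  have huu : ∀ i, 0 ≤ uu i := by
    intro i
    by_contra hneg
    push_neg at hneg
    set s : ℝ := (f (p', q') - vb) / (-(uu i)) with hsdef
    have hs0 : 0 ≤ s := div_nonneg (by linarith) (by linarith)
    have hzD : ((p' + s • (Pi.single i 1 : Fin n' → ℝ), q') : (Fin n' → ℝ) × (Fin n' → ℝ)) ∈ Dset := by
      constructor
      · intro k
        show p' k ≤ p' k + s * (Pi.single i 1 : Fin n' → ℝ) k
        nlinarith [hsingle_nonneg i k]
      · intro k; exact le_rfl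
    have hfz : f (p' + s • (Pi.single i 1 : Fin n' → ℝ), q') = f (p', q') + s * uu i := by
      have hz : ((p' + s • (Pi.single i 1 : Fin n' → ℝ), q') : (Fin n' → ℝ) × (Fin n' → ℝ))
          = (p', q') + s • (((Pi.single i 1 : Fin n' → ℝ), (0 : Fin n' → ℝ)) : (Fin n' → ℝ) × (Fin n' → ℝ)) := by
        apply Prod.ext
        · rfl
        · show q' = q' + s • (0 : Fin n' → ℝ)
          simp
      rw [hz, map_add, map_smul, smul_eq_mul, huudef]
    have hval : s * uu i = -(f (p', q') - vb) := by
      have hne : uu i ≠ 0 := ne_of_lt hneg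
      have h9 : s * (-(uu i)) = f (p', q') - vb := by
        rw [hsdef]
        exact div_mul_cancel₀ _ (neg_ne_zero.mpr hne)
      linarith
    have := hfD _ hzD
    rw [hfz, hval] at this
    linarith
  have hww : ∀ i, ww i ≤ 0 := by
    intro i
    by_contra hneg
    push_neg at hneg
    set s : ℝ := (f (p', q') - vb) / (ww i) with hsdef
    have hs0 : 0 ≤ s := div_nonneg (by linarith) (by linarith)
    have hzD : ((p', q' - s • (Pi.single i 1 : Fin n' → ℝ)) : (Fin n' → ℝ) × (Fin n' → ℝ)) ∈ Dset := by
      constructor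
      · intro k; exact le_rfl
      · intro k
        show q' k - s * (Pi.single i 1 : Fin n' → ℝ) k ≤ q' k
        nlinarith [hsingle_nonneg i k]
    have hfz : f (p', q' - s • (Pi.single i 1 : Fin n' → ℝ)) = f (p', q') - s * ww i := by
      have hz : ((p', q' - s • (Pi.single i 1 : Fin n' → ℝ)) : (Fin n' → ℝ) × (Fin n' → ℝ))
          = (p', q') - s • (((0 : Fin n' → ℝ), (Pi.single i 1 : Fin n' → ℝ)) : (Fin n' → ℝ) × (Fin n' → ℝ)) := by
        apply Prod.ext
        · show p' = p' - s • (0 : Fin n' → ℝ)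
          simp
        · rfl
      rw [hz, map_sub, map_smul, smul_eq_mul, hwwdef]
    have hval : s * ww i = f (p', q') - vb := by
      have hne : ww i ≠ 0 := ne_of_gt hneg
      rw [hsdef]
      exact div_mul_cancel₀ _ hne
    have := hfD _ hzD
    rw [hfz, hval] at this
    linarith
  have hvv : ∀ i, 0 ≤ vv i := fun i => by rw [hvvdef]; simp; exact hww i
  -- the sorted list of lines
  set r : (ℝ × ℝ) → (ℝ × ℝ) → Prop := fun a b => b.1 ≤ a.1 with hrdef
  haveI hTot : IsTotal (ℝ × ℝ) r := ⟨fun a b => le_total b.1 a.1⟩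
  haveI hTrans : IsTrans (ℝ × ℝ) r := ⟨fun a b c hab hbc => le_trans hbc hab⟩
  set L : List (ℝ × ℝ) := (List.finRange n').map fun i => (uu i, vv i) with hLdef
  set Ls : List (ℝ × ℝ) := L.insertionSort r with hLsdef
  have hsorted : Ls.Pairwise (fun a b => b.1 ≤ a.1) := List.pairwise_insertionSort r L
  have hperm : Ls.Perm L := List.perm_insertionSort r L
  have hmemLs : ∀ i, (uu i, vv i) ∈ Ls := fun i =>
    hperm.mem_iff.2 (List.mem_map.2 ⟨i, List.mem_finRange i, rfl⟩)
  have hLs_mem : ∀ l ∈ Ls, ∃ i, l = (uu i, vv i) := by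
    intro l hl
    obtain ⟨i, _, hi⟩ := List.mem_map.1 (hperm.subset hl)
    exact ⟨i, hi.symm⟩
  have hLsnn : ∀ l ∈ Ls, 0 ≤ l.1 ∧ 0 ≤ l.2 := by
    intro l hl
    obtain ⟨i, rfl⟩ := hLs_mem l hl
    exact ⟨huu i, hvv i⟩
  obtain ⟨R, hRnn, _, hrep⟩ := rep Ls hsorted hLsnn
  -- swap lemma
  have hswap : ∀ {k : ℕ} (a b : Fin k → ℝ), (∀ x, 0 ≤ a x) → (∀ x, 0 ≤ b x) →
      ∑ x, maxL Ls (a x) (b x)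
        = (R.map fun r0 => r0.1 * ∑ x, max (a x - r0.2 * b x) 0).sum := by
    intro k a b ha hb
    rw [Finset.sum_congr rfl fun x _ => hrep (a x) (b x) (ha x) (hb x)]
    rw [stmt4_finset_sum_list_sum]
    apply congrArg
    apply List.map_congr_left
    intro r0 _
    rw [Finset.mul_sum]
  -- construct the matrix achieving the max on (p,q)
  have hchoice : ∀ j : Fin n, ∃ (i : Fin n') (w : ℝ), 0 ≤ w ∧ w ≤ 1 ∧
      w * (uu i * p j - vv i * q j) = maxL Ls (p j) (q j) := by
    intro j
    rcases maxL_eq_zero_or_mem Ls (p j) (q j) with h0 | ⟨l, hl, he⟩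
    · exact ⟨Classical.arbitrary _, 0, le_rfl, zero_le_one, by rw [h0]; ring⟩
    · obtain ⟨i, rfl⟩ := hLs_mem l hl
      exact ⟨i, 1, zero_le_one, le_rfl, by rw [he]; ring⟩
  choose σf wf hw0 hw1 hwe using hchoice
  set W : Fin n' → Fin n → ℝ := fun i j => if i = σf j then wf j else 0 with hWdef
  have hWS : W ∈ SetS := by
    constructor
    · intro i j
      dsimp [W]
      split
      · exact hw0 j
      · exact le_rfl
    · intro j
      have : ∑ i, W i j = wf j := by
        rw [hWdef]
        rw [Finset.sum_ite_eq' Finset.univ (σf j) (fun _ => wf j)]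
        simp
      rw [this]
      exact hw1 j
  have hWval : f (Φ W) = ∑ j, maxL Ls (p j) (q j) := by
    have h1 : f (Φ W) = ∑ i, (∑ j, W i j * p j) * uu i + ∑ i, (∑ j, W i j * q j) * ww i :=
      hexpand _ _
    rw [h1]
    have h2 : ∀ i, (∑ j, W i j * q j) * ww i = -((∑ j, W i j * q j) * vv i) := by
      intro i
      rw [hvvdef]
      ring
    rw [Finset.sum_congr rfl fun i _ => h2 i, Finset.sum_neg_distrib]
    have h3 : ∑ i, (∑ j, W i j * p j) * uu i - ∑ i, (∑ j, W i j * q j) * vv i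
        = ∑ j, wf j * (uu (σf j) * p j - vv (σf j) * q j) := by
      rw [← Finset.sum_sub_distrib]
      have h4 : ∀ i, (∑ j, W i j * p j) * uu i - (∑ j, W i j * q j) * vv i
          = ∑ j, W i j * (uu i * p j - vv i * q j) := by
        intro i
        rw [Finset.sum_mul, Finset.sum_mul, ← Finset.sum_sub_distrib]
        exact Finset.sum_congr rfl fun j _ => by ring
      rw [Finset.sum_congr rfl fun i _ => h4 i, Finset.sum_comm]
      refine Finset.sum_congr rfl fun j _ => ?_
      have h5 : ∀ i, W i j * (uu i * p j - vv i * q j)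
          = if i = σf j then wf j * (uu i * p j - vv i * q j) else 0 := by
        intro i
        rw [hWdef]
        dsimp only
        split <;> ring
      rw [Finset.sum_congr rfl fun i _ => h5 i]
      rw [Finset.sum_ite_eq' Finset.univ (σf j)
        (fun i => wf j * (uu i * p j - vv i * q j))]
      simp
    rw [← sub_eq_add_neg, h3]
    exact Finset.sum_congr rfl fun j _ => hwe j
  have hKW : f (Φ W) < ub := hfK _ ⟨W, hWS, rfl⟩
  -- the contradiction chain
  have c1 : f (p', q') = ∑ i, (p' i * uu i - q' i * vv i) := by
    rw [hexpand p' q']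
    rw [Finset.sum_sub_distrib]
    congr 1
    rw [← Finset.sum_neg_distrib]
    refine Finset.sum_congr rfl fun i _ => ?_
    rw [hvvdef]
    ring
  have c2 : ∑ i, (p' i * uu i - q' i * vv i) ≤ ∑ i, maxL Ls (p' i) (q' i) := by
    refine Finset.sum_le_sum fun i _ => ?_
    have := le_maxL (hmemLs i) (p' i) (q' i)
    calc p' i * uu i - q' i * vv i = (uu i, vv i).1 * p' i - (uu i, vv i).2 * q' i := by
          dsimp; ring
      _ ≤ maxL Ls (p' i) (q' i) := this
  have c3 : ∑ i, maxL Ls (p' i) (q' i) ≤ ∑ j, maxL Ls (p j) (q j) := by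
    rw [hswap p' q' hp' hq', hswap p q hp hq]
    apply sum_map_le
    intro r0 hr0
    exact mul_le_mul_of_nonneg_left (D r0.2 (hRnn r0 hr0).2) (hRnn r0 hr0).1
  rw [hWval] at hKW
  linarith

/-- `(p,q) ≻ (p',q')` iff the Lorenz curves are ordered: `β_x(p,q) ≤ β_x(p',q')` for all `x`. -/
theorem stmt_4 {n n' : ℕ} (p q : Fin n → ℝ) (p' q' : Fin n' → ℝ)
    (hp : ∀ i, 0 ≤ p i) (hq : ∀ i, 0 ≤ q i)
    (hp' : ∀ i, 0 ≤ p' i) (hq' : ∀ i, 0 ≤ q' i) :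
    SubMaj p q p' q' ↔ ∀ x : ℝ, beta x p q ≤ beta x p' q' := by
  constructor
  · exact stmt4_forward p q p' q'
  · intro hβ
    apply stmt4_backward p q p' q' hp hq hp' hq'
    intro t' ht'
    have h1 : beta (dot t' p') p' q' ≤ ((dot t' q' : ℝ) : EReal) :=
      sInf_le ⟨t', ht', le_rfl, rfl⟩
    obtain ⟨t, ht, hxp, hxq⟩ :=
      stmt4_exists_test_of_beta_le p q (dot t' p') (dot t' q') ((hβ _).trans h1)
    exact ⟨t, ht, hxp, hxq⟩
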